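/- Let (V, ω) be a finite dimensional symplectic vector space, W, W' ⊆ V coisotropic subspaces with dim W' = dim W and W + (W')^ω = V, and set U := W ∩ W'. Then U is a symplectic subspace of V (i.e., the restriction ω|_U is nondegenerate). -/

import Mathlib

/-- The symplectic complement `W^ω = {v ∈ V | ω(v,w) = 0 for all w ∈ W}`. -/
def symplCompl {V : Type*} [AddCommGroup V] [Module ℝ V]
    (ω : V →ₗ[ℝ] V →ₗ[ℝ] ℝ) (W : Submodule ℝ V) : Submodule ℝ V where
  carrier := {v | ∀ w ∈ W, ω v w = 0}
  add_mem' := by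
    intro a b ha hb w hw
    simp [map_add, LinearMap.add_apply, ha w hw, hb w hw]
  zero_mem' := by
    intro w hw
    simp
  smul_mem' := by
    intro c a ha w hw
    simp [map_smul, LinearMap.smul_apply, ha w hw]


lemma mem_symplCompl {V : Type*} [AddCommGroup V] [Module ℝ V]
    {ω : V →ₗ[ℝ] V →ₗ[ℝ] ℝ} {W : Submodule ℝ V} {v : V} :
    v ∈ symplCompl ω W ↔ ∀ w ∈ W, ω v w = 0 := Iff.rfl

lemma symplCompl_eq_orthogonal {V : Type*} [AddCommGroup V] [Module ℝ V]
    (ω : V →ₗ[ℝ] V →ₗ[ℝ] ℝ) (halt : ∀ v : V, ω v v = 0) (S : Submodule ℝ V) :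
    symplCompl ω S = LinearMap.BilinForm.orthogonal ω S := by
  have hrefl : LinearMap.BilinForm.IsRefl ω := (show ω.IsAlt from halt).isRefl
  ext v
  constructor
  · intro h w hw; exact hrefl v w (h w hw)
  · intro h w hw; exact hrefl w v (h w hw)

lemma symplCompl_anti {V : Type*} [AddCommGroup V] [Module ℝ V]
    (ω : V →ₗ[ℝ] V →ₗ[ℝ] ℝ) {S T : Submodule ℝ V} (h : S ≤ T) :
    symplCompl ω T ≤ symplCompl ω S :=
  fun _ hv w hw => hv w (h hw)

lemma symplCompl_sup {V : Type*} [AddCommGroup V] [Module ℝ V]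
    (ω : V →ₗ[ℝ] V →ₗ[ℝ] ℝ) (S T : Submodule ℝ V) :
    symplCompl ω (S ⊔ T) = symplCompl ω S ⊓ symplCompl ω T := by
  apply le_antisymm
  · exact le_inf (symplCompl_anti ω le_sup_left) (symplCompl_anti ω le_sup_right)
  · intro v hv w hw
    obtain ⟨x, hx, y, hy, rfl⟩ := Submodule.mem_sup.mp hw
    rw [map_add, hv.1 x hx, hv.2 y hy, add_zero]

/-- Let `(V, ω)` be a finite dimensional symplectic vector space, `W, W' ⊆ V`
coisotropic subspaces with `dim W' = dim W` and `W + (W')^ω = V`, and set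
`U := W ∩ W'`.  Then `U` is a symplectic subspace of `V`, i.e. `U ∩ U^ω = {0}`
(the restriction of `ω` to `U` is nondegenerate). -/
theorem stmt4 {V : Type*} [AddCommGroup V] [Module ℝ V] [FiniteDimensional ℝ V]
    (ω : V →ₗ[ℝ] V →ₗ[ℝ] ℝ)
    (halt : ∀ v : V, ω v v = 0)
    (hnondeg : ∀ v : V, (∀ w : V, ω v w = 0) → v = 0)
    (W W' : Submodule ℝ V)
    (hW : symplCompl ω W ≤ W) (hW' : symplCompl ω W' ≤ W')
    (hdim : Module.finrank ℝ W' = Module.finrank ℝ W)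
    (hsum : W ⊔ symplCompl ω W' = ⊤) :
    (W ⊓ W') ⊓ symplCompl ω (W ⊓ W') = ⊥ := by
  have hrefl : LinearMap.BilinForm.IsRefl ω := (show ω.IsAlt from halt).isRefl
  have hnd : LinearMap.BilinForm.Nondegenerate ω :=
    (LinearMap.IsRefl.nondegenerate_iff_separatingLeft (show LinearMap.IsRefl ω from hrefl)).mpr hnondeg
  -- finrank of symplectic complements
  have hfr : ∀ S : Submodule ℝ V,
      Module.finrank ℝ S + Module.finrank ℝ (symplCompl ω S) = Module.finrank ℝ V := by
    intro S
    rw [symplCompl_eq_orthogonal ω halt,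
      LinearMap.BilinForm.finrank_orthogonal hnd]
    have := Submodule.finrank_le S
    omega
  set n := Module.finrank ℝ V
  -- W ⊓ W'^ω = ⊥
  have hdisj : W ⊓ symplCompl ω W' = ⊥ := by
    rw [← Submodule.finrank_eq_zero (R := ℝ)]
    have h1 := Submodule.finrank_sup_add_finrank_inf_eq W (symplCompl ω W')
    rw [hsum, finrank_top] at h1
    have h2 := hfr W'
    omega
  -- symplCompl of the intersection
  have hkey : symplCompl ω (W ⊓ W') = symplCompl ω W ⊔ symplCompl ω W' := by
    have hle : symplCompl ω W ⊔ symplCompl ω W' ≤ symplCompl ω (W ⊓ W') :=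
      sup_le (symplCompl_anti ω inf_le_left) (symplCompl_anti ω inf_le_right)
    refine (Submodule.eq_of_le_of_finrank_le hle ?_).symm
    have h1 := hfr W
    have h2 := hfr W'
    have h3 := hfr (W ⊓ W')
    have h4 := hfr (W ⊔ W')
    have h5 := Submodule.finrank_sup_add_finrank_inf_eq W W'
    have h6 := Submodule.finrank_sup_add_finrank_inf_eq (symplCompl ω W) (symplCompl ω W')
    rw [← symplCompl_sup ω W W'] at h6
    omega
  -- final argument
  rw [eq_bot_iff]
  rintro v ⟨⟨hvW, hvW'⟩, hvU⟩
  rw [hkey] at hvU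
  obtain ⟨a, ha, b, hb, rfl⟩ := Submodule.mem_sup.mp hvU
  have hbW : b ∈ W := by
    have : (a + b) - a ∈ W := Submodule.sub_mem _ hvW (hW ha)
    simpa using this
  have hb0 : b = 0 := by
    have : b ∈ W ⊓ symplCompl ω W' := ⟨hbW, hb⟩
    rwa [hdisj, Submodule.mem_bot] at this
  subst hb0
  rw [add_zero] at hvW hvW' ⊢
  rw [Submodule.mem_bot]
  apply hnondeg
  intro x
  have hx : x ∈ W ⊔ symplCompl ω W' := hsum ▸ Submodule.mem_top
  obtain ⟨w, hw, c, hc, rfl⟩ := Submodule.mem_sup.mp hx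
  rw [map_add, ha w hw, hrefl c a (hc a hvW'), add_zero]
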